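/- arXiv:1307.2662 — 6 statements merged into one kernel-verified Lean document; each statement's English description precedes it below -/
import Mathlib

section
/- Let Ω be an n×n real positive semidefinite matrix and let C and D be d×n real matrices satisfying C Ω Dᵀ = D Ω Dᵀ. Then the d×d matrix C Ω Cᵀ − D Ω Dᵀ is positive semidefinite. -/
open Matrix

/-- Generalized Cauchy–Schwarz: if `C Ω Dᵀ = D Ω Dᵀ` with `Ω` positive semidefinite,
then `C Ω Cᵀ − D Ω Dᵀ` is positive semidefinite. -/
theorem stmt0 (n d : ℕ) (Ω : Matrix (Fin n) (Fin n) ℝ) (hΩ : Ω.PosSemidef)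
    (C D : Matrix (Fin d) (Fin n) ℝ) (h : C * Ω * Dᵀ = D * Ω * Dᵀ) :
    (C * Ω * Cᵀ - D * Ω * Dᵀ).PosSemidef := by
  have hs : Ωᵀ = Ω := by
    have := hΩ.isHermitian
    ext i j; have := congrFun (congrFun this i) j
    simpa [Matrix.conjTranspose_apply] using this
  have h2 : D * Ω * Cᵀ = D * Ω * Dᵀ := by
    have := congrArg Matrix.transpose h
    simp only [Matrix.transpose_mul, Matrix.transpose_transpose, hs] at this
    rw [Matrix.mul_assoc, Matrix.mul_assoc]
    exact this
  have key := hΩ.mul_mul_conjTranspose_same (C - D)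
  have : (C - D) * Ω * (C - D)ᴴ = C * Ω * Cᵀ - D * Ω * Dᵀ := by
    simp only [Matrix.conjTranspose_sub, Matrix.sub_mul, Matrix.mul_sub]
    have hct : Cᴴ = Cᵀ := by ext i j; simp [Matrix.conjTranspose_apply]
    have hdt : Dᴴ = Dᵀ := by ext i j; simp [Matrix.conjTranspose_apply]
    rw [hct, hdt, h, h2]
    abel
  rwa [this] at key
end

section
/- Let Σ be an N×N real positive definite matrix, let Λ be an N×r real matrix of full column rank r, and let W be any N×N real positive definite matrix. Define Ξ_W = (ΛᵀWΛ)⁻¹ ΛᵀWΣWΛ (ΛᵀWΛ)⁻¹ and Ξ_e = (ΛᵀΣ⁻¹Λ)⁻¹. Then Ξ_W − Ξ_e is positive semidefinite; in particular, vᵀΞ_e v ≤ vᵀΞ_W v for every v ∈ ℝʳ. (Consequently the weight W = Σ⁻¹ yields the minimum asymptotic variance of the estimated common component among all weighted principal components estimators.) -/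
open Matrix

private lemma mulVec_inj_of_rank {N r : ℕ} (Λ : Matrix (Fin N) (Fin r) ℝ)
    (hΛ : Λ.rank = r) : Function.Injective Λ.mulVec := by
  rw [show Λ.mulVec = Λ.mulVecLin from rfl, ← LinearMap.ker_eq_bot]
  have h := LinearMap.finrank_range_add_finrank_ker Λ.mulVecLin
  rw [show Module.finrank ℝ (LinearMap.range Λ.mulVecLin) = Λ.rank from rfl] at h
  rw [hΛ] at h
  simp only [Module.finrank_fintype_fun_eq_card, Fintype.card_fin] at h
  have : Module.finrank ℝ (LinearMap.ker Λ.mulVecLin) = 0 := by omega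
  exact Submodule.finrank_eq_zero.mp this

private lemma posDef_conj {N r : ℕ} {W : Matrix (Fin N) (Fin N) ℝ} (hW : W.PosDef)
    {Λ : Matrix (Fin N) (Fin r) ℝ} (hinj : Function.Injective Λ.mulVec) :
    (Λᵀ * W * Λ).PosDef := by
  refine PosDef.of_dotProduct_mulVec_pos ?_ ?_
  · have := isHermitian_conjTranspose_mul_mul Λ hW.1
    simpa [conjTranspose_eq_transpose_of_trivial] using this
  · intro x hx
    have hΛx : Λ *ᵥ x ≠ 0 := fun h => hx (hinj (by simpa using h))
    have h2 := hW.dotProduct_mulVec_pos hΛx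
    rw [star_trivial] at h2
    show 0 < star x ⬝ᵥ ((Λᵀ * W * Λ) *ᵥ x)
    rw [star_trivial, ← Matrix.mulVec_mulVec, ← Matrix.mulVec_mulVec,
      dotProduct_mulVec, vecMul_transpose]
    exact h2

/-- Optimality of the weight `W = Σ⁻¹`: `Ξ_W − Ξ_e` is positive semidefinite for every
positive definite weight matrix `W`, and consequently `vᵀ Ξ_e v ≤ vᵀ Ξ_W v` for all `v`. -/
theorem stmt1 (N r : ℕ) (Sig : Matrix (Fin N) (Fin N) ℝ) (hSig : Sig.PosDef)
    (Λ : Matrix (Fin N) (Fin r) ℝ) (hΛ : Λ.rank = r)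
    (W : Matrix (Fin N) (Fin N) ℝ) (hW : W.PosDef) :
    ((Λᵀ * W * Λ)⁻¹ * (Λᵀ * W * Sig * W * Λ) * (Λᵀ * W * Λ)⁻¹
      - (Λᵀ * Sig⁻¹ * Λ)⁻¹).PosSemidef
    ∧ ∀ v : Fin r → ℝ,
        v ⬝ᵥ ((Λᵀ * Sig⁻¹ * Λ)⁻¹ *ᵥ v)
          ≤ v ⬝ᵥ (((Λᵀ * W * Λ)⁻¹ * (Λᵀ * W * Sig * W * Λ) * (Λᵀ * W * Λ)⁻¹) *ᵥ v) := by
  have hinj := mulVec_inj_of_rank Λ hΛ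
  set S := (open scoped MatrixOrder in CFC.sqrt Sig) with hSdef
  have hSS : S * S = Sig := by
    open scoped MatrixOrder in exact CFC.sqrt_mul_sqrt_self Sig hSig.posSemidef.nonneg
  have hSsym : Sᵀ = S := by
    have : IsSelfAdjoint S := by
      open scoped MatrixOrder in exact (CFC.sqrt_nonneg Sig).isSelfAdjoint
    rw [← conjTranspose_eq_transpose_of_trivial]; exact this
  have hSdetu : IsUnit S.det := by
    have hdet : S.det * S.det = Sig.det := by rw [← det_mul, hSS]
    have : Sig.det ≠ 0 := ne_of_gt hSig.det_pos
    exact isUnit_iff_ne_zero.mpr (fun h => this (by rw [← hdet, h, zero_mul]))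
  have hSinv : S * S⁻¹ = 1 := mul_nonsing_inv S hSdetu
  have hSinvS : S⁻¹ * S⁻¹ = Sig⁻¹ := by rw [← hSS, Matrix.mul_inv_rev]
  have hSinvsym : (S⁻¹)ᵀ = S⁻¹ := by rw [transpose_nonsing_inv, hSsym]
  have hWsym : Wᵀ = W := by
    simpa [conjTranspose_eq_transpose_of_trivial] using hW.1.eq
  -- invertibility of ΛᵀWΛ and ΛᵀΣ⁻¹Λ
  have hWΛ : (Λᵀ * W * Λ).PosDef := posDef_conj hW hinj
  have hEΛ : (Λᵀ * Sig⁻¹ * Λ).PosDef := posDef_conj hSig.inv hinj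
  have hWΛu : IsUnit (Λᵀ * W * Λ).det := isUnit_iff_ne_zero.mpr (ne_of_gt hWΛ.det_pos)
  have hEΛu : IsUnit (Λᵀ * Sig⁻¹ * Λ).det := isUnit_iff_ne_zero.mpr (ne_of_gt hEΛ.det_pos)
  set M := (Λᵀ * W * Λ)⁻¹ with hMdef
  have hMmul : M * (Λᵀ * W * Λ) = 1 := nonsing_inv_mul _ hWΛu
  have hMsym : Mᵀ = M := by
    rw [hMdef, transpose_nonsing_inv]
    congr 1
    rw [transpose_mul, transpose_mul, transpose_transpose, hWsym, Matrix.mul_assoc]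
  set A := S * (W * Λ * M) with hAdef
  set B := S⁻¹ * Λ with hBdef
  have hAT : Aᵀ = M * (Λᵀ * W) * S := by
    rw [hAdef]
    simp [transpose_mul, hMsym, hWsym, hSsym, Matrix.mul_assoc]
  have hBT : Bᵀ = Λᵀ * S⁻¹ := by
    rw [hBdef, transpose_mul, hSinvsym]
  have hAB : Aᵀ * B = 1 := by
    rw [hAT, hBdef]
    calc M * (Λᵀ * W) * S * (S⁻¹ * Λ) = M * (Λᵀ * W * Λ) := by
          rw [Matrix.mul_assoc (M * (Λᵀ * W)) S, ← Matrix.mul_assoc S, hSinv,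
            Matrix.one_mul, Matrix.mul_assoc]
      _ = 1 := hMmul
  have hBA : Bᵀ * A = 1 := by
    have := congrArg transpose hAB
    rwa [transpose_mul, transpose_transpose, transpose_one] at this
  have hAA : Aᵀ * A = M * (Λᵀ * W * Sig * W * Λ) * M := by
    rw [hAT, hAdef, ← hSS]
    simp [Matrix.mul_assoc]
  have hBB : Bᵀ * B = Λᵀ * Sig⁻¹ * Λ := by
    rw [hBT, hBdef, ← hSinvS]
    simp [Matrix.mul_assoc]
  clear_value S M A B
  have hBBu : IsUnit (Bᵀ * B).det := by rw [hBB]; exact hEΛu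
  have hBBmul : (Bᵀ * B)⁻¹ * (Bᵀ * B) = 1 := nonsing_inv_mul _ hBBu
  have hBBsym : ((Bᵀ * B)⁻¹)ᵀ = (Bᵀ * B)⁻¹ := by
    rw [transpose_nonsing_inv]
    congr 1
    rw [transpose_mul, transpose_transpose]
  set P := B * (Bᵀ * B)⁻¹ * Bᵀ with hPdef
  have hPsym : Pᵀ = P := by
    rw [hPdef, transpose_mul, transpose_mul, transpose_transpose, hBBsym, Matrix.mul_assoc]
  have hPP : P * P = P := by
    rw [hPdef]
    calc B * (Bᵀ * B)⁻¹ * Bᵀ * (B * (Bᵀ * B)⁻¹ * Bᵀ)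
        = B * ((Bᵀ * B)⁻¹ * (Bᵀ * B)) * ((Bᵀ * B)⁻¹ * Bᵀ) := by
          simp only [Matrix.mul_assoc]
      _ = B * (Bᵀ * B)⁻¹ * Bᵀ := by rw [hBBmul, Matrix.mul_one, Matrix.mul_assoc]
  have hAPA : Aᵀ * P * A = (Λᵀ * Sig⁻¹ * Λ)⁻¹ := by
    rw [← hBB, hPdef]
    calc Aᵀ * (B * (Bᵀ * B)⁻¹ * Bᵀ) * A
        = (Aᵀ * B) * ((Bᵀ * B)⁻¹ * (Bᵀ * A)) := by simp only [Matrix.mul_assoc]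
      _ = (Bᵀ * B)⁻¹ := by rw [hAB, hBA, Matrix.one_mul, Matrix.mul_one]
  set Q : Matrix (Fin N) (Fin N) ℝ := 1 - P with hQdef
  have hQsym : Qᵀ = Q := by rw [hQdef, transpose_sub, transpose_one, hPsym]
  have hQQ : Q * Q = Q := by
    rw [hQdef, Matrix.sub_mul, Matrix.mul_sub, Matrix.mul_sub, hPP]
    simp
  have hR : (Q * A)ᵀ * (Q * A) = Aᵀ * A - Aᵀ * P * A := by
    rw [transpose_mul, hQsym, Matrix.mul_assoc, ← Matrix.mul_assoc Q Q A, hQQ,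
      hQdef, Matrix.sub_mul, Matrix.mul_sub, Matrix.one_mul, Matrix.mul_assoc]
    simp only [hPdef, Matrix.mul_assoc]
  have key : M * (Λᵀ * W * Sig * W * Λ) * M - (Λᵀ * Sig⁻¹ * Λ)⁻¹
      = (Q * A)ᵀ * (Q * A) := by
    rw [hR, hAA, hAPA]
  have hpsd : (M * (Λᵀ * W * Sig * W * Λ) * M
      - (Λᵀ * Sig⁻¹ * Λ)⁻¹).PosSemidef := by
    rw [key]
    have := posSemidef_conjTranspose_mul_self (Q * A)
    simpa [conjTranspose_eq_transpose_of_trivial] using this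
  refine ⟨hpsd, fun v => ?_⟩
  have := hpsd.dotProduct_mulVec_nonneg v
  rw [sub_mulVec, dotProduct_sub] at this
  simp only [star_trivial] at this
  linarith
end

section
/- Let Σ be an N×N real positive definite matrix, Λ an N×r real matrix of full column rank, and F a T×r real matrix with FᵀF invertible; set M_F = I_T − F(FᵀF)⁻¹Fᵀ, A_F = [Σ⁻¹ − Σ⁻¹Λ(ΛᵀΣ⁻¹Λ)⁻¹ΛᵀΣ⁻¹] ⊗ M_F, and G = [I_N − Λ(ΛᵀΛ)⁻¹Λᵀ] ⊗ M_F, where ⊗ denotes the Kronecker product. Then G (Σ ⊗ I_T) A_F = G. -/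
open Matrix
open scoped Kronecker

lemma aux_isUnit_det_of_rank_eq {n : ℕ} (B : Matrix (Fin n) (Fin n) ℝ) (h : B.rank = n) :
    IsUnit B.det := by
  rw [← Matrix.isUnit_iff_isUnit_det, ← Matrix.mulVec_surjective_iff_isUnit]
  have htop : LinearMap.range B.mulVecLin = ⊤ := by
    apply Submodule.eq_top_of_finrank_eq
    simpa [Matrix.rank] using h
  intro v
  obtain ⟨w, hw⟩ := LinearMap.range_eq_top.mp htop v
  exact ⟨w, hw⟩

lemma aux_rank_transpose_mul_self_unit {N r : ℕ} (Λ : Matrix (Fin N) (Fin r) ℝ)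
    (hΛ : Λ.rank = r) : IsUnit (Λᵀ * Λ).det :=
  aux_isUnit_det_of_rank_eq _ (by rw [Matrix.rank_transpose_mul_self, hΛ])

/-- The identity `G (Σ ⊗ I_T) A_F = G`, where `G` is the regular-PC analogue of `A_F`. -/
theorem stmt5 (N r T : ℕ) (Sig : Matrix (Fin N) (Fin N) ℝ) (hSig : Sig.PosDef)
    (Λ : Matrix (Fin N) (Fin r) ℝ) (hΛ : Λ.rank = r)
    (F : Matrix (Fin T) (Fin r) ℝ) (hF : IsUnit (Fᵀ * F).det) :
    (((1 : Matrix (Fin N) (Fin N) ℝ) - Λ * (Λᵀ * Λ)⁻¹ * Λᵀ) ⊗ₖ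
        ((1 : Matrix (Fin T) (Fin T) ℝ) - F * (Fᵀ * F)⁻¹ * Fᵀ))
      * (Sig ⊗ₖ (1 : Matrix (Fin T) (Fin T) ℝ))
      * ((Sig⁻¹ - Sig⁻¹ * Λ * (Λᵀ * Sig⁻¹ * Λ)⁻¹ * Λᵀ * Sig⁻¹) ⊗ₖ
        ((1 : Matrix (Fin T) (Fin T) ℝ) - F * (Fᵀ * F)⁻¹ * Fᵀ))
    = ((1 : Matrix (Fin N) (Fin N) ℝ) - Λ * (Λᵀ * Λ)⁻¹ * Λᵀ) ⊗ₖ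
        ((1 : Matrix (Fin T) (Fin T) ℝ) - F * (Fᵀ * F)⁻¹ * Fᵀ) := by
  set M : Matrix (Fin T) (Fin T) ℝ := 1 - F * (Fᵀ * F)⁻¹ * Fᵀ with hM
  set P : Matrix (Fin N) (Fin N) ℝ := 1 - Λ * (Λᵀ * Λ)⁻¹ * Λᵀ with hP
  set Q : Matrix (Fin N) (Fin N) ℝ :=
    Sig⁻¹ - Sig⁻¹ * Λ * (Λᵀ * Sig⁻¹ * Λ)⁻¹ * Λᵀ * Sig⁻¹ with hQ
  have hSunit : IsUnit Sig.det := hSig.det_pos.ne'.isUnit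
  have hMM : M * 1 * M = M := by
    have hFF : F * (Fᵀ * F)⁻¹ * Fᵀ * (F * (Fᵀ * F)⁻¹ * Fᵀ) = F * (Fᵀ * F)⁻¹ * Fᵀ := by
      have h1 : (Fᵀ * F)⁻¹ * (Fᵀ * F) = 1 := Matrix.nonsing_inv_mul _ hF
      calc F * (Fᵀ * F)⁻¹ * Fᵀ * (F * (Fᵀ * F)⁻¹ * Fᵀ)
          = F * ((Fᵀ * F)⁻¹ * (Fᵀ * F)) * ((Fᵀ * F)⁻¹ * Fᵀ) := by
            simp only [Matrix.mul_assoc]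
        _ = F * (Fᵀ * F)⁻¹ * Fᵀ := by rw [h1, Matrix.mul_one, Matrix.mul_assoc]
    rw [mul_one, hM, Matrix.sub_mul, Matrix.one_mul, Matrix.mul_sub, Matrix.mul_one, hFF]
    abel
  have hΛunit : IsUnit (Λᵀ * Λ).det := aux_rank_transpose_mul_self_unit Λ hΛ
  have hPΛ : P * Λ = 0 := by
    rw [hP, Matrix.sub_mul, Matrix.one_mul, Matrix.mul_assoc, Matrix.mul_assoc,
      Matrix.nonsing_inv_mul _ hΛunit, Matrix.mul_one, sub_self]
  have hSigQ : Sig * Q = 1 - Λ * (Λᵀ * Sig⁻¹ * Λ)⁻¹ * Λᵀ * Sig⁻¹ := by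
    have hS : Sig * Sig⁻¹ = 1 := Matrix.mul_nonsing_inv _ hSunit
    rw [hQ, Matrix.mul_sub, hS]
    congr 1
    calc Sig * (Sig⁻¹ * Λ * (Λᵀ * Sig⁻¹ * Λ)⁻¹ * Λᵀ * Sig⁻¹)
        = Sig * Sig⁻¹ * Λ * (Λᵀ * Sig⁻¹ * Λ)⁻¹ * Λᵀ * Sig⁻¹ := by
          simp only [Matrix.mul_assoc]
      _ = Λ * (Λᵀ * Sig⁻¹ * Λ)⁻¹ * Λᵀ * Sig⁻¹ := by rw [hS, Matrix.one_mul]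
  have hPSQ : P * Sig * Q = P := by
    rw [Matrix.mul_assoc, hSigQ, Matrix.mul_sub, Matrix.mul_one]
    have h0 : P * (Λ * (Λᵀ * Sig⁻¹ * Λ)⁻¹ * Λᵀ * Sig⁻¹) = 0 := by
      calc P * (Λ * (Λᵀ * Sig⁻¹ * Λ)⁻¹ * Λᵀ * Sig⁻¹)
          = P * Λ * ((Λᵀ * Sig⁻¹ * Λ)⁻¹ * (Λᵀ * Sig⁻¹)) := by
            simp only [Matrix.mul_assoc]
        _ = 0 := by rw [hPΛ, Matrix.zero_mul]
    rw [h0, sub_zero]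
  rw [← Matrix.mul_kronecker_mul, ← Matrix.mul_kronecker_mul, hPSQ, hMM]
end

section
/- Let Σ be an N×N real positive definite matrix, Λ an N×r real matrix of full column rank, and F a T×r real matrix with FᵀF invertible; set M_F = I_T − F(FᵀF)⁻¹Fᵀ, A_F = [Σ⁻¹ − Σ⁻¹Λ(ΛᵀΣ⁻¹Λ)⁻¹ΛᵀΣ⁻¹] ⊗ M_F, and G = [I_N − Λ(ΛᵀΛ)⁻¹Λᵀ] ⊗ M_F, where ⊗ denotes the Kronecker product. Let Z be an (N·T)×d real matrix such that ZᵀGZ and ZᵀA_FZ are invertible. Then the d×d matrix (ZᵀGZ)⁻¹ Zᵀ G (Σ ⊗ I_T) G Z (ZᵀGZ)⁻¹ − (Zᵀ A_F Z)⁻¹ is positive semidefinite. -/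
open Matrix
open scoped Kronecker

/-- If `Λ` has full column rank then `mulVecLin` is injective. -/
lemma aux_mulVecLin_injective {N r : ℕ} (Λ : Matrix (Fin N) (Fin r) ℝ) (hΛ : Λ.rank = r) :
    Function.Injective Λ.mulVecLin := by
  rw [← LinearMap.ker_eq_bot]
  rw [← Submodule.finrank_eq_zero (R := ℝ)]
  have h := LinearMap.finrank_range_add_finrank_ker Λ.mulVecLin
  have hr : Module.finrank ℝ (LinearMap.range Λ.mulVecLin) = r := hΛ
  rw [hr, Module.finrank_fin_fun] at h
  omega

/-- Conjugation of a positive definite matrix by an injective matrix is positive definite. -/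
lemma aux_posDef_conj {N r : ℕ} {W : Matrix (Fin N) (Fin N) ℝ} (hW : W.PosDef)
    (Λ : Matrix (Fin N) (Fin r) ℝ) (hinj : Function.Injective Λ.mulVecLin) :
    (Λᵀ * W * Λ).PosDef := by
  refine Matrix.PosDef.of_dotProduct_mulVec_pos ?_ ?_
  · have := Matrix.isHermitian_conjTranspose_mul_mul Λ hW.isHermitian
    rwa [Matrix.conjTranspose_eq_transpose_of_trivial] at this
  · intro x hx
    have hx' : Λ *ᵥ x ≠ 0 := by
      intro h
      apply hx
      have : Λ.mulVecLin x = Λ.mulVecLin 0 := by simp [Matrix.mulVecLin_apply, h]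
      exact hinj this
    have h2 := hW.dotProduct_mulVec_pos hx'
    simp only [star_trivial] at h2 ⊢
    rw [← Matrix.mulVec_mulVec, ← Matrix.mulVec_mulVec, Matrix.dotProduct_mulVec,
      Matrix.vecMul_transpose]
    exact h2

/-- Relative efficiency: the sandwich covariance of the regular PC estimator dominates the
asymptotic covariance `(Zᵀ A_F Z)⁻¹` of the WPC estimator. -/
theorem stmt6 (N r T d : ℕ) (Sig : Matrix (Fin N) (Fin N) ℝ) (hSig : Sig.PosDef)
    (Λ : Matrix (Fin N) (Fin r) ℝ) (hΛ : Λ.rank = r)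
    (F : Matrix (Fin T) (Fin r) ℝ) (hF : IsUnit (Fᵀ * F).det)
    (Z : Matrix (Fin N × Fin T) (Fin d) ℝ)
    (hG : IsUnit (Zᵀ * (((1 : Matrix (Fin N) (Fin N) ℝ) - Λ * (Λᵀ * Λ)⁻¹ * Λᵀ) ⊗ₖ
        ((1 : Matrix (Fin T) (Fin T) ℝ) - F * (Fᵀ * F)⁻¹ * Fᵀ)) * Z).det)
    (hA : IsUnit (Zᵀ * ((Sig⁻¹ - Sig⁻¹ * Λ * (Λᵀ * Sig⁻¹ * Λ)⁻¹ * Λᵀ * Sig⁻¹) ⊗ₖ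
        ((1 : Matrix (Fin T) (Fin T) ℝ) - F * (Fᵀ * F)⁻¹ * Fᵀ)) * Z).det) :
    ((Zᵀ * (((1 : Matrix (Fin N) (Fin N) ℝ) - Λ * (Λᵀ * Λ)⁻¹ * Λᵀ) ⊗ₖ
          ((1 : Matrix (Fin T) (Fin T) ℝ) - F * (Fᵀ * F)⁻¹ * Fᵀ)) * Z)⁻¹
      * (Zᵀ * (((1 : Matrix (Fin N) (Fin N) ℝ) - Λ * (Λᵀ * Λ)⁻¹ * Λᵀ) ⊗ₖ
          ((1 : Matrix (Fin T) (Fin T) ℝ) - F * (Fᵀ * F)⁻¹ * Fᵀ))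
          * (Sig ⊗ₖ (1 : Matrix (Fin T) (Fin T) ℝ))
          * (((1 : Matrix (Fin N) (Fin N) ℝ) - Λ * (Λᵀ * Λ)⁻¹ * Λᵀ) ⊗ₖ
          ((1 : Matrix (Fin T) (Fin T) ℝ) - F * (Fᵀ * F)⁻¹ * Fᵀ)) * Z)
      * (Zᵀ * (((1 : Matrix (Fin N) (Fin N) ℝ) - Λ * (Λᵀ * Λ)⁻¹ * Λᵀ) ⊗ₖ
          ((1 : Matrix (Fin T) (Fin T) ℝ) - F * (Fᵀ * F)⁻¹ * Fᵀ)) * Z)⁻¹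
      - (Zᵀ * ((Sig⁻¹ - Sig⁻¹ * Λ * (Λᵀ * Sig⁻¹ * Λ)⁻¹ * Λᵀ * Sig⁻¹) ⊗ₖ
          ((1 : Matrix (Fin T) (Fin T) ℝ) - F * (Fᵀ * F)⁻¹ * Fᵀ)) * Z)⁻¹).PosSemidef := by
  classical
  -- Abbreviations
  set Mf : Matrix (Fin T) (Fin T) ℝ :=
      (1 : Matrix (Fin T) (Fin T) ℝ) - F * (Fᵀ * F)⁻¹ * Fᵀ with hMf_def
  set P : Matrix (Fin N) (Fin N) ℝ :=
      (1 : Matrix (Fin N) (Fin N) ℝ) - Λ * (Λᵀ * Λ)⁻¹ * Λᵀ with hP_def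
  set B : Matrix (Fin N) (Fin N) ℝ :=
      Sig⁻¹ - Sig⁻¹ * Λ * (Λᵀ * Sig⁻¹ * Λ)⁻¹ * Λᵀ * Sig⁻¹ with hB_def
  set G : Matrix (Fin N × Fin T) (Fin N × Fin T) ℝ := P ⊗ₖ Mf with hG_def
  set Sk : Matrix (Fin N × Fin T) (Fin N × Fin T) ℝ :=
      Sig ⊗ₖ (1 : Matrix (Fin T) (Fin T) ℝ) with hSk_def
  set A' : Matrix (Fin N × Fin T) (Fin N × Fin T) ℝ := B ⊗ₖ Mf with hA_def
  set S : Matrix (Fin d) (Fin d) ℝ := Zᵀ * G * Z with hS_def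
  set V : Matrix (Fin d) (Fin d) ℝ := Zᵀ * A' * Z with hV_def
  -- basic invertibility
  have hinj : Function.Injective Λ.mulVecLin := aux_mulVecLin_injective Λ hΛ
  have hSigInv : Sig⁻¹.PosDef := hSig.inv
  have hLL : (Λᵀ * Λ).PosDef := by
    have := aux_posDef_conj (Matrix.PosDef.one (n := Fin N) (R := ℝ)) Λ hinj
    rwa [Matrix.mul_one] at this
  have hC : (Λᵀ * Sig⁻¹ * Λ).PosDef := aux_posDef_conj hSigInv Λ hinj
  have hLLd : IsUnit (Λᵀ * Λ).det := hLL.det_pos.ne'.isUnit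
  have hCd : IsUnit (Λᵀ * Sig⁻¹ * Λ).det := hC.det_pos.ne'.isUnit
  have hSigd : IsUnit Sig.det := hSig.det_pos.ne'.isUnit
  -- transposes
  have hSigT : Sigᵀ = Sig := by
    rw [← Matrix.conjTranspose_eq_transpose_of_trivial]; exact hSig.isHermitian
  have hSigInvT : (Sig⁻¹)ᵀ = Sig⁻¹ := by
    rw [Matrix.transpose_nonsing_inv, hSigT]
  have hMsym : Mfᵀ = Mf := by
    rw [hMf_def]
    simp [Matrix.transpose_sub, Matrix.transpose_mul, Matrix.transpose_nonsing_inv,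
      Matrix.mul_assoc]
  have hPsym : Pᵀ = P := by
    rw [hP_def]
    simp [Matrix.transpose_sub, Matrix.transpose_mul, Matrix.transpose_nonsing_inv,
      Matrix.mul_assoc]
  have hBsym : Bᵀ = B := by
    rw [hB_def]
    simp [Matrix.transpose_sub, Matrix.transpose_mul, Matrix.transpose_nonsing_inv,
      hSigT, hSigInvT, Matrix.mul_assoc]
  -- idempotency of Mf
  have hMM : Mf * Mf = Mf := by
    have hQQ : F * (Fᵀ * F)⁻¹ * Fᵀ * (F * (Fᵀ * F)⁻¹ * Fᵀ) = F * (Fᵀ * F)⁻¹ * Fᵀ := by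
      have key : ∀ X : Matrix (Fin r) (Fin T) ℝ, (Fᵀ * F)⁻¹ * (Fᵀ * (F * X)) = X := by
        intro X
        rw [← Matrix.mul_assoc Fᵀ F X, ← Matrix.mul_assoc, Matrix.nonsing_inv_mul _ hF,
          Matrix.one_mul]
      simp only [Matrix.mul_assoc]
      rw [key]
    rw [hMf_def]
    simp only [Matrix.sub_mul, Matrix.mul_sub, Matrix.one_mul, Matrix.mul_one, hQQ]
    abel
  -- annihilation identities
  have hPL : P * Λ = 0 := by
    rw [hP_def]
    simp only [Matrix.sub_mul, Matrix.one_mul, Matrix.mul_assoc]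
    rw [Matrix.nonsing_inv_mul _ hLLd, Matrix.mul_one, sub_self]
  have hLP : Λᵀ * P = 0 := by
    rw [hP_def]
    simp only [Matrix.mul_sub, Matrix.mul_one, ← Matrix.mul_assoc]
    rw [Matrix.mul_nonsing_inv _ hLLd, Matrix.one_mul, sub_self]
  have hLB : Λᵀ * B = 0 := by
    rw [hB_def]
    simp only [Matrix.mul_sub, ← Matrix.mul_assoc]
    rw [Matrix.mul_nonsing_inv _ hCd, Matrix.one_mul, sub_self]
  -- key products
  have hSigB : Sig * B = 1 - Λ * ((Λᵀ * Sig⁻¹ * Λ)⁻¹ * (Λᵀ * Sig⁻¹)) := by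
    have hc : ∀ X : Matrix (Fin N) (Fin N) ℝ, Sig * (Sig⁻¹ * X) = X := by
      intro X
      rw [← Matrix.mul_assoc, Matrix.mul_nonsing_inv _ hSigd, Matrix.one_mul]
    rw [hB_def]
    simp only [Matrix.mul_sub, Matrix.mul_nonsing_inv _ hSigd, Matrix.mul_assoc, hc]
  have hBSig : B * Sig = 1 - Sig⁻¹ * (Λ * ((Λᵀ * Sig⁻¹ * Λ)⁻¹ * Λᵀ)) := by
    rw [hB_def]
    simp only [Matrix.sub_mul, Matrix.nonsing_inv_mul _ hSigd, Matrix.mul_assoc,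
      Matrix.nonsing_inv_mul _ hSigd, Matrix.mul_one]
  have hPSigB : P * Sig * B = P := by
    rw [Matrix.mul_assoc, hSigB, Matrix.mul_sub, Matrix.mul_one, ← Matrix.mul_assoc, hPL,
      Matrix.zero_mul, sub_zero]
  have hBSigP : B * Sig * P = P := by
    rw [hBSig, Matrix.sub_mul, Matrix.one_mul]
    have : Sig⁻¹ * (Λ * ((Λᵀ * Sig⁻¹ * Λ)⁻¹ * Λᵀ)) * P = 0 := by
      simp only [Matrix.mul_assoc, hLP]
      simp
    rw [this, sub_zero]
  have hBSigB : B * Sig * B = B := by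
    rw [hBSig, Matrix.sub_mul, Matrix.one_mul]
    have : Sig⁻¹ * (Λ * ((Λᵀ * Sig⁻¹ * Λ)⁻¹ * Λᵀ)) * B = 0 := by
      simp only [Matrix.mul_assoc, hLB]
      simp
    rw [this, sub_zero]
  -- Kronecker-level identities
  have hGSA : G * Sk * A' = G := by
    rw [hG_def, hSk_def, hA_def, ← Matrix.mul_kronecker_mul, ← Matrix.mul_kronecker_mul,
      hPSigB, Matrix.mul_one, hMM]
  have hASG : A' * Sk * G = G := by
    rw [hG_def, hSk_def, hA_def, ← Matrix.mul_kronecker_mul, ← Matrix.mul_kronecker_mul,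
      hBSigP, Matrix.mul_one, hMM]
  have hASA : A' * Sk * A' = A' := by
    rw [hSk_def, hA_def, ← Matrix.mul_kronecker_mul, ← Matrix.mul_kronecker_mul,
      hBSigB, Matrix.mul_one, hMM]
  have hGsym : Gᵀ = G := by
    rw [hG_def, ← Matrix.kroneckerMap_transpose, hPsym, hMsym]
  have hAsym : A'ᵀ = A' := by
    rw [hA_def, ← Matrix.kroneckerMap_transpose, hBsym, hMsym]
  -- symmetry and inverses of S and V
  have hSsym : Sᵀ = S := by
    rw [hS_def, Matrix.transpose_mul, Matrix.transpose_mul, Matrix.transpose_transpose,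
      hGsym, Matrix.mul_assoc]
  have hVsym : Vᵀ = V := by
    rw [hV_def, Matrix.transpose_mul, Matrix.transpose_mul, Matrix.transpose_transpose,
      hAsym, Matrix.mul_assoc]
  have hSinvT : (S⁻¹)ᵀ = S⁻¹ := by rw [Matrix.transpose_nonsing_inv, hSsym]
  have hVinvT : (V⁻¹)ᵀ = V⁻¹ := by rw [Matrix.transpose_nonsing_inv, hVsym]
  have hSl : S⁻¹ * S = 1 := Matrix.nonsing_inv_mul _ hG
  have hSr : S * S⁻¹ = 1 := Matrix.mul_nonsing_inv _ hG
  have hVl : V⁻¹ * V = 1 := Matrix.nonsing_inv_mul _ hA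
  have hVr : V * V⁻¹ = 1 := Matrix.mul_nonsing_inv _ hA
  -- the comparison matrix as a congruence
  set E : Matrix (Fin N × Fin T) (Fin d) ℝ := G * (Z * S⁻¹) - A' * (Z * V⁻¹) with hE_def
  have hET : Eᵀ = S⁻¹ * (Zᵀ * G) - V⁻¹ * (Zᵀ * A') := by
    rw [hE_def]
    simp only [Matrix.transpose_sub, Matrix.transpose_mul, hGsym, hAsym, hSinvT, hVinvT,
      Matrix.mul_assoc]
  -- expansion pieces
  have h1 : S⁻¹ * (Zᵀ * G) * Sk * (G * (Z * S⁻¹))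
      = S⁻¹ * (Zᵀ * G * Sk * G * Z) * S⁻¹ := by
    simp only [Matrix.mul_assoc]
  have h2 : S⁻¹ * (Zᵀ * G) * Sk * (A' * (Z * V⁻¹)) = V⁻¹ := by
    have e1 : S⁻¹ * (Zᵀ * G) * Sk * (A' * (Z * V⁻¹))
        = S⁻¹ * ((Zᵀ * (G * Sk * A')) * (Z * V⁻¹)) := by
      simp only [Matrix.mul_assoc]
    rw [e1, hGSA]
    calc S⁻¹ * (Zᵀ * G * (Z * V⁻¹)) = S⁻¹ * (Zᵀ * G * Z * V⁻¹) := by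
            simp only [Matrix.mul_assoc]
      _ = S⁻¹ * (S * V⁻¹) := by rw [← hS_def]
      _ = V⁻¹ := by rw [← Matrix.mul_assoc, hSl, Matrix.one_mul]
  have h3 : V⁻¹ * (Zᵀ * A') * Sk * (G * (Z * S⁻¹)) = V⁻¹ := by
    have e1 : V⁻¹ * (Zᵀ * A') * Sk * (G * (Z * S⁻¹))
        = V⁻¹ * ((Zᵀ * (A' * Sk * G)) * (Z * S⁻¹)) := by
      simp only [Matrix.mul_assoc]
    rw [e1, hASG]
    calc V⁻¹ * (Zᵀ * G * (Z * S⁻¹)) = V⁻¹ * (Zᵀ * G * Z * S⁻¹) := by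
            simp only [Matrix.mul_assoc]
      _ = V⁻¹ * (S * S⁻¹) := by rw [← hS_def]
      _ = V⁻¹ := by rw [hSr, Matrix.mul_one]
  have h4 : V⁻¹ * (Zᵀ * A') * Sk * (A' * (Z * V⁻¹)) = V⁻¹ := by
    have e1 : V⁻¹ * (Zᵀ * A') * Sk * (A' * (Z * V⁻¹))
        = V⁻¹ * ((Zᵀ * (A' * Sk * A')) * (Z * V⁻¹)) := by
      simp only [Matrix.mul_assoc]
    rw [e1, hASA]
    calc V⁻¹ * (Zᵀ * A' * (Z * V⁻¹)) = V⁻¹ * (Zᵀ * A' * Z * V⁻¹) := by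
            simp only [Matrix.mul_assoc]
      _ = V⁻¹ * (V * V⁻¹) := by rw [← hV_def]
      _ = V⁻¹ := by rw [hVr, Matrix.mul_one]
  have hmain : S⁻¹ * (Zᵀ * G * Sk * G * Z) * S⁻¹ - V⁻¹ = Eᵀ * Sk * E := by
    rw [hET, hE_def]
    simp only [Matrix.sub_mul, Matrix.mul_sub]
    rw [h1, h2, h3, h4]
    abel
  rw [hmain]
  -- positive semidefiniteness of the congruence
  have hSkPSD : Sk.PosSemidef := by
    open scoped MatrixOrder in
    obtain ⟨R, hR⟩ := CStarAlgebra.nonneg_iff_eq_star_mul_self.mp hSig.posSemidef.nonneg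
    rw [star_eq_conjTranspose] at hR
    rw [hSk_def, hR]
    have : (Rᴴ * R) ⊗ₖ ((1 : Matrix (Fin T) (Fin T) ℝ) * 1)
        = (Rᴴ ⊗ₖ (1 : Matrix (Fin T) (Fin T) ℝ)) * (R ⊗ₖ 1) := Matrix.mul_kronecker_mul _ _ _ _
    rw [show ((1 : Matrix (Fin T) (Fin T) ℝ)) = (1 : Matrix (Fin T) (Fin T) ℝ) * 1 by
      rw [Matrix.mul_one], this]
    have hH : Rᴴ ⊗ₖ (1 : Matrix (Fin T) (Fin T) ℝ) = (R ⊗ₖ (1 : Matrix (Fin T) (Fin T) ℝ))ᴴ := by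
      rw [Matrix.conjTranspose_eq_transpose_of_trivial,
        Matrix.conjTranspose_eq_transpose_of_trivial, ← Matrix.kroneckerMap_transpose,
        Matrix.transpose_one]
    rw [hH]
    exact Matrix.posSemidef_conjTranspose_mul_self _
  have := hSkPSD.conjTranspose_mul_mul_same E
  rwa [Matrix.conjTranspose_eq_transpose_of_trivial] at this
end

section
/- Let Σ be an N×N real positive definite matrix, Λ an N×r real matrix of full column rank, and F a T×r real matrix with FᵀF invertible; set M_F = I_T − F(FᵀF)⁻¹Fᵀ and A_F = [Σ⁻¹ − Σ⁻¹Λ(ΛᵀΣ⁻¹Λ)⁻¹ΛᵀΣ⁻¹] ⊗ M_F, where ⊗ denotes the Kronecker product. Let (Ω, 𝔉, P) be a probability space and U : Ω → ℝ^{N·T} a random vector whose coordinates are square-integrable with E[U_a] = 0 for all a and Cov(U_a, U_b) = (Σ ⊗ I_T)_{ab} for all coordinates a, b. Then for any fixed (N·T)×d real matrix Z and all i, j ≤ d, Cov((Zᵀ A_F U)_i, (Zᵀ A_F U)_j) = (Zᵀ A_F Z)_{ij}. -/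
open Matrix MeasureTheory
open scoped Kronecker

/-- Covariance of two real random variables. -/
noncomputable def cov {Ω : Type*} [MeasurableSpace Ω] (P : MeasureTheory.Measure Ω)
    (X Y : Ω → ℝ) : ℝ :=
  ∫ ω, (X ω - ∫ x, X x ∂P) * (Y ω - ∫ x, Y x ∂P) ∂P

lemma aux_cov_sum {Ω : Type*} [MeasurableSpace Ω] (P : MeasureTheory.Measure Ω)
    [IsProbabilityMeasure P] {ι : Type*} [Fintype ι] (c e : ι → ℝ) (U : Ω → ι → ℝ)
    (hU : ∀ a, MemLp (fun ω => U ω a) 2 P) (hmean : ∀ a, ∫ ω, U ω a ∂P = 0) :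
    cov P (fun ω => ∑ a, c a * U ω a) (fun ω => ∑ a, e a * U ω a)
      = ∑ a, ∑ b, c a * e b * cov P (fun ω => U ω a) (fun ω => U ω b) := by
  have hintU : ∀ a, Integrable (fun ω => U ω a) P := fun a => (hU a).integrable one_le_two
  have hmul : ∀ a b, Integrable (fun ω => U ω a * U ω b) P := by
    intro a b
    have h := ((hU b).smul (hU a) (r := 1))
    exact h.integrable le_rfl
  have hmeanc : ∀ (f : ι → ℝ), ∫ ω, ∑ a, f a * U ω a ∂P = 0 := by
    intro f
    rw [integral_finset_sum _ (fun a _ => (hintU a).const_mul _)]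
    simp [integral_const_mul, hmean]
  have hcovab : ∀ a b, cov P (fun ω => U ω a) (fun ω => U ω b)
      = ∫ ω, U ω a * U ω b ∂P := by
    intro a b
    unfold cov
    simp [hmean]
  simp only [hcovab]
  unfold cov
  simp only [hmeanc, sub_zero]
  have hrw : ∀ ω : Ω, (∑ a, c a * U ω a) * (∑ b, e b * U ω b)
      = ∑ a, ∑ b, c a * e b * (U ω a * U ω b) := by
    intro ω
    rw [Finset.sum_mul_sum]
    exact Finset.sum_congr rfl fun a _ => Finset.sum_congr rfl fun b _ => by ring
  simp only [hrw]
  rw [integral_finset_sum _ (fun a _ =>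
    integrable_finset_sum _ (fun b _ => (hmul a b).const_mul _))]
  refine Finset.sum_congr rfl fun a _ => ?_
  rw [integral_finset_sum _ (fun b _ => (hmul a b).const_mul _)]
  refine Finset.sum_congr rfl fun b _ => ?_
  rw [integral_const_mul]

/-- If `U` has mean zero and covariance matrix `Σ ⊗ I_T`, then the covariance matrix of
`Zᵀ A_F U` is `Zᵀ A_F Z`. -/
theorem stmt7 (N r T d : ℕ) (Sig : Matrix (Fin N) (Fin N) ℝ) (hSig : Sig.PosDef)
    (Λ : Matrix (Fin N) (Fin r) ℝ) (hΛ : Λ.rank = r)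
    (F : Matrix (Fin T) (Fin r) ℝ) (hF : IsUnit (Fᵀ * F).det)
    {Ω : Type*} [MeasurableSpace Ω] (P : MeasureTheory.Measure Ω) [IsProbabilityMeasure P]
    (U : Ω → Fin N × Fin T → ℝ)
    (hUint : ∀ a, MemLp (fun ω => U ω a) 2 P)
    (hUmean : ∀ a, ∫ ω, U ω a ∂P = 0)
    (hUcov : ∀ a b, cov P (fun ω => U ω a) (fun ω => U ω b)
        = (Sig ⊗ₖ (1 : Matrix (Fin T) (Fin T) ℝ)) a b)
    (Z : Matrix (Fin N × Fin T) (Fin d) ℝ) :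
    ∀ i j : Fin d,
      cov P
        (fun ω => ((Zᵀ * ((Sig⁻¹ - Sig⁻¹ * Λ * (Λᵀ * Sig⁻¹ * Λ)⁻¹ * Λᵀ * Sig⁻¹) ⊗ₖ
            ((1 : Matrix (Fin T) (Fin T) ℝ) - F * (Fᵀ * F)⁻¹ * Fᵀ))) *ᵥ U ω) i)
        (fun ω => ((Zᵀ * ((Sig⁻¹ - Sig⁻¹ * Λ * (Λᵀ * Sig⁻¹ * Λ)⁻¹ * Λᵀ * Sig⁻¹) ⊗ₖ
            ((1 : Matrix (Fin T) (Fin T) ℝ) - F * (Fᵀ * F)⁻¹ * Fᵀ))) *ᵥ U ω) j)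
      = (Zᵀ * ((Sig⁻¹ - Sig⁻¹ * Λ * (Λᵀ * Sig⁻¹ * Λ)⁻¹ * Λᵀ * Sig⁻¹) ⊗ₖ
            ((1 : Matrix (Fin T) (Fin T) ℝ) - F * (Fᵀ * F)⁻¹ * Fᵀ)) * Z) i j := by
  intro i j
  set C : Matrix (Fin N) (Fin N) ℝ :=
    Sig⁻¹ - Sig⁻¹ * Λ * (Λᵀ * Sig⁻¹ * Λ)⁻¹ * Λᵀ * Sig⁻¹ with hC
  set M : Matrix (Fin T) (Fin T) ℝ :=
    (1 : Matrix (Fin T) (Fin T) ℝ) - F * (Fᵀ * F)⁻¹ * Fᵀ with hM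
  set A : Matrix (Fin N × Fin T) (Fin N × Fin T) ℝ := C ⊗ₖ M with hA
  set S : Matrix (Fin N × Fin T) (Fin N × Fin T) ℝ :=
    Sig ⊗ₖ (1 : Matrix (Fin T) (Fin T) ℝ) with hS
  set B : Matrix (Fin d) (Fin N × Fin T) ℝ := Zᵀ * A with hB
  -- basic invertibility facts
  have hSd : IsUnit Sig.det := isUnit_iff_ne_zero.mpr hSig.det_pos.ne'
  have hinj : ∀ x : Fin r → ℝ, Λ *ᵥ x = 0 → x = 0 := by
    intro x hx
    have hker : LinearMap.ker Λ.mulVecLin = ⊥ := by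
      have h1 := Λ.mulVecLin.finrank_range_add_finrank_ker
      rw [show Module.finrank ℝ (LinearMap.range Λ.mulVecLin) = Λ.rank from rfl, hΛ] at h1
      simp only [Module.finrank_fintype_fun_eq_card, Fintype.card_fin] at h1
      exact Submodule.finrank_eq_zero.mp (by omega)
    have hmem : x ∈ LinearMap.ker Λ.mulVecLin := by
      simpa [Matrix.mulVecLin_apply] using hx
    simpa [hker] using hmem
  have hH : (Λᵀ * Sig⁻¹ * Λ).PosDef := by
    have hinv := hSig.inv
    refine Matrix.PosDef.of_dotProduct_mulVec_pos ?_ ?_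
    · have h := isHermitian_conjTranspose_mul_mul Λ hinv.isHermitian
      simpa using h
    · intro x hx
      have hΛx : Λ *ᵥ x ≠ 0 := fun h => hx (hinj x h)
      have h2 := hinv.dotProduct_mulVec_pos hΛx
      simpa [← Matrix.mulVec_mulVec, Matrix.dotProduct_mulVec, Matrix.vecMul_transpose,
        Matrix.mul_assoc] using h2
  have hHd : IsUnit (Λᵀ * Sig⁻¹ * Λ).det := isUnit_iff_ne_zero.mpr hH.det_pos.ne'
  -- symmetry
  have hSigT : Sigᵀ = Sig := by
    have := hSig.isHermitian
    exact (by simpa [Matrix.conjTranspose_eq_transpose_of_trivial] using this : Sig.IsSymm)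
  have hSigiT : (Sig⁻¹)ᵀ = Sig⁻¹ := by
    rw [Matrix.transpose_nonsing_inv, hSigT]
  have hCsym : Cᵀ = C := by
    rw [hC]
    simp only [Matrix.transpose_sub, Matrix.transpose_mul, Matrix.transpose_transpose,
      Matrix.transpose_nonsing_inv, hSigiT, hSigT]
    simp only [Matrix.mul_assoc]
  have hMsym : Mᵀ = M := by
    rw [hM]
    simp only [Matrix.transpose_sub, Matrix.transpose_one, Matrix.transpose_mul,
      Matrix.transpose_transpose, Matrix.transpose_nonsing_inv]
    simp only [Matrix.mul_assoc]
  -- idempotency relations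
  have hMM : M * M = M := by
    rw [hM]
    have h2 : F * ((Fᵀ * F)⁻¹ * (Fᵀ * (F * ((Fᵀ * F)⁻¹ * Fᵀ)))) = F * ((Fᵀ * F)⁻¹ * Fᵀ) := by
      rw [← Matrix.mul_assoc Fᵀ F, Matrix.nonsing_inv_mul_cancel_left _ _ hF]
    simp only [Matrix.mul_sub, Matrix.sub_mul, Matrix.one_mul, Matrix.mul_one,
      Matrix.mul_assoc, h2]
    abel
  have hCSC : C * Sig * C = C := by
    rw [hC]
    have hHd' : IsUnit (Λᵀ * (Sig⁻¹ * Λ)).det := by rwa [← Matrix.mul_assoc]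
    have hc1 : ∀ B : Matrix (Fin N) (Fin N) ℝ, Sig⁻¹ * (Sig * B) = B := fun B =>
      Matrix.nonsing_inv_mul_cancel_left _ _ hSd
    have hc2 : ∀ Z : Matrix (Fin r) (Fin N) ℝ,
        Λᵀ * (Sig⁻¹ * (Λ * ((Λᵀ * (Sig⁻¹ * Λ))⁻¹ * Z))) = Z := by
      intro Z
      rw [← Matrix.mul_assoc Sig⁻¹, ← Matrix.mul_assoc Λᵀ]
      exact Matrix.mul_nonsing_inv_cancel_left _ _ hHd'
    simp only [Matrix.sub_mul, Matrix.mul_sub, Matrix.mul_assoc, hc1, hc2,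
      Matrix.mul_nonsing_inv _ hSd, Matrix.mul_one]
    abel
  have hASA : A * S * A = A := by
    rw [hA, hS, ← Matrix.mul_kronecker_mul, ← Matrix.mul_kronecker_mul, Matrix.mul_one, hCSC, hMM]
  have hAT : Aᵀ = A := by
    rw [hA, ← Matrix.kroneckerMap_transpose, hCsym, hMsym]
  have hmain : B * S * Bᵀ = Zᵀ * A * Z := by
    rw [hB, Matrix.transpose_mul, Matrix.transpose_transpose, hAT]
    calc Zᵀ * A * S * (A * Z) = Zᵀ * (A * S * A) * Z := by simp only [Matrix.mul_assoc]
    _ = Zᵀ * A * Z := by rw [hASA, Matrix.mul_assoc]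
  -- covariance computation
  have hmv : ∀ (u : Fin N × Fin T → ℝ) (k : Fin d), (B *ᵥ u) k = ∑ a, B k a * u a :=
    fun u k => rfl
  have hcov := aux_cov_sum P (B i) (B j) U hUint hUmean
  simp only [hmv]
  rw [hcov, ← hmain]
  simp only [hUcov, ← hS]
  rw [Matrix.mul_apply]
  rw [Finset.sum_comm]
  refine Finset.sum_congr rfl fun b _ => ?_
  rw [Matrix.mul_apply, Finset.sum_mul]
  exact Finset.sum_congr rfl fun a _ => by simp [Matrix.transpose_apply]; ring
end

section
/- Let W be an N×N real symmetric positive semidefinite matrix and Y an N×T real matrix. Let F̂ be a T×r matrix whose columns are √T times orthonormal eigenvectors of Yᵀ W Y corresponding to its r largest eigenvalues, and let Λ̂ = T⁻¹ Y F̂. Then (1/T) F̂ᵀ F̂ = I_r, the r×r matrix Λ̂ᵀ W Λ̂ is diagonal, and for every N×r real matrix Λ and every T×r real matrix F with (1/T) FᵀF = I_r, trace[(Y − Λ̂F̂ᵀ)ᵀ W (Y − Λ̂F̂ᵀ)] ≤ trace[(Y − ΛFᵀ)ᵀ W (Y − ΛFᵀ)]. -/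
open Matrix

private lemma trace_conj_nonneg {N r : ℕ} {W : Matrix (Fin N) (Fin N) ℝ}
    (hW : W.PosSemidef) (D : Matrix (Fin N) (Fin r) ℝ) :
    0 ≤ trace (Dᵀ * W * D) := by
  rw [Matrix.trace]
  apply Finset.sum_nonneg
  intro k _
  have h := (posSemidef_iff_dotProduct_mulVec.mp hW).2 (fun i => D i k)
  simp only [Matrix.diag_apply, Matrix.mul_apply, Matrix.transpose_apply] at *
  simp only [dotProduct, Matrix.mulVec, Pi.star_apply, star_trivial] at h
  convert h using 1
  simp_rw [Finset.sum_mul, Finset.mul_sum]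
  rw [Finset.sum_comm]
  apply Finset.sum_congr rfl; intro x _
  apply Finset.sum_congr rfl; intro y _
  ring

private lemma expandObj {N T r : ℕ} (hT : 0 < T)
    {W : Matrix (Fin N) (Fin N) ℝ} (hWs : Wᵀ = W)
    (Y : Matrix (Fin N) (Fin T) ℝ)
    (Λ : Matrix (Fin N) (Fin r) ℝ) (F : Matrix (Fin T) (Fin r) ℝ)
    (hF : Fᵀ * F = (T : ℝ) • 1) :
    trace ((Y - Λ * Fᵀ)ᵀ * W * (Y - Λ * Fᵀ))
      = trace (Yᵀ * W * Y) - (1 / (T:ℝ)) * trace (Fᵀ * (Yᵀ * W * Y) * F)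
        + (T:ℝ) * trace ((Λ - (1/(T:ℝ)) • (Y * F))ᵀ * W * (Λ - (1/(T:ℝ)) • (Y * F))) := by
  have hT' : (T:ℝ) ≠ 0 := Nat.cast_ne_zero.mpr hT.ne'
  set c : ℝ := 1 / (T:ℝ) with hc
  set β : ℝ := trace (Λᵀ * W * (Y * F)) with hβ
  set γ : ℝ := trace (Fᵀ * (Yᵀ * W * Y) * F) with hγ
  have h1 : trace (Yᵀ * (W * (Λ * Fᵀ))) = β := by
    rw [show Yᵀ * (W * (Λ * Fᵀ)) = (Yᵀ * W * Λ) * Fᵀ by simp [Matrix.mul_assoc],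
      Matrix.trace_mul_comm, ← Matrix.trace_transpose]
    congr 1
    simp [Matrix.transpose_mul, hWs, Matrix.mul_assoc]
  have h2 : trace (F * (Λᵀ * (W * Y))) = β := by
    rw [show F * (Λᵀ * (W * Y)) = F * (Λᵀ * W * Y) by simp [Matrix.mul_assoc],
      Matrix.trace_mul_comm]
    congr 1
    simp [Matrix.mul_assoc]
  have h3 : trace (F * (Λᵀ * (W * (Λ * Fᵀ)))) = (T:ℝ) * trace (Λᵀ * W * Λ) := by
    rw [show F * (Λᵀ * (W * (Λ * Fᵀ))) = F * (Λᵀ * W * Λ) * Fᵀ by simp [Matrix.mul_assoc],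
      Matrix.trace_mul_comm,
      show Fᵀ * (F * (Λᵀ * W * Λ)) = (Fᵀ * F) * (Λᵀ * W * Λ) by simp [Matrix.mul_assoc],
      hF, Matrix.smul_mul, Matrix.one_mul, Matrix.trace_smul, smul_eq_mul]
  have h4 : trace (Fᵀ * (Yᵀ * (W * Λ))) = β := by
    rw [← Matrix.trace_transpose]
    congr 1
    simp [Matrix.transpose_mul, hWs, Matrix.mul_assoc]
  have h5 : trace (Fᵀ * (Yᵀ * (W * (Y * F)))) = γ := by
    rw [hγ]; congr 1; simp [Matrix.transpose_mul, Matrix.mul_assoc]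
  have eL : trace ((Y - Λ * Fᵀ)ᵀ * W * (Y - Λ * Fᵀ))
      = trace (Yᵀ * W * Y) - 2 * β + (T:ℝ) * trace (Λᵀ * W * Λ) := by
    simp only [Matrix.transpose_sub, Matrix.transpose_mul, Matrix.transpose_transpose,
      Matrix.sub_mul, Matrix.mul_sub, Matrix.trace_sub, Matrix.mul_assoc]
    rw [h1, h2, h3, show trace (Yᵀ * (W * Y)) = trace (Yᵀ * W * Y) by rw [Matrix.mul_assoc],
      show trace (Λᵀ * (W * Λ)) = trace (Λᵀ * W * Λ) by rw [Matrix.mul_assoc]]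
    ring
  have eD : trace ((Λ - c • (Y * F))ᵀ * W * (Λ - c • (Y * F)))
      = trace (Λᵀ * W * Λ) - 2 * c * β + c^2 * γ := by
    simp only [Matrix.transpose_sub, Matrix.transpose_smul, Matrix.transpose_mul,
      Matrix.sub_mul, Matrix.mul_sub, Matrix.smul_mul, Matrix.mul_smul,
      Matrix.trace_sub, Matrix.trace_smul, smul_smul, smul_eq_mul, Matrix.mul_assoc]
    have hA : trace (Λᵀ * (W * Λ)) = trace (Λᵀ * W * Λ) := by rw [Matrix.mul_assoc]
    have hB : trace (Λᵀ * (W * (Y * F))) = β := by rw [hβ, Matrix.mul_assoc]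
    rw [h4, h5, hA, hB]
    ring
  rw [eL, eD]
  have k1 : (T:ℝ) * c = 1 := by rw [hc]; field_simp
  have k2 : (T:ℝ) * c^2 = c := by rw [pow_two, ← mul_assoc, k1, one_mul]
  linear_combination 2*β*k1 - γ*k2

private lemma trace_eig {T r : ℕ} (ν : Fin T → ℝ) (G : Matrix (Fin T) (Fin r) ℝ) :
    trace (Gᵀ * Matrix.diagonal ν * G) = ∑ t : Fin T, ν t * ∑ k : Fin r, (G t k)^2 := by
  rw [Matrix.trace]
  simp only [Matrix.diag_apply, Matrix.mul_apply, Matrix.transpose_apply,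
    Matrix.diagonal_apply, ite_mul, zero_mul, mul_ite, mul_zero,
    Finset.sum_ite_eq, Finset.mem_univ, if_true]
  rw [Finset.sum_comm]
  apply Finset.sum_congr rfl; intro t _
  rw [Finset.mul_sum]
  apply Finset.sum_congr rfl; intro k _
  rw [Finset.sum_ite_eq' Finset.univ t (fun x => G x k * ν x)]
  simp only [Finset.mem_univ, if_true]
  ring

private lemma maxTrace {T r : ℕ} (hrT : r ≤ T)
    (ν : Fin T → ℝ) (hν : Antitone ν)
    (Q : Matrix (Fin T) (Fin T) ℝ) (hQ1 : Qᵀ * Q = 1)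
    (F : Matrix (Fin T) (Fin r) ℝ) (hF : Fᵀ * F = (T:ℝ) • 1) :
    trace (Fᵀ * (Q * Matrix.diagonal ν * Qᵀ) * F)
      ≤ (T:ℝ) * ∑ k : Fin r, ν (Fin.castLE hrT k) := by
  rcases Nat.eq_zero_or_pos r with hr | hr
  · subst hr
    simp [Matrix.trace]
  set G : Matrix (Fin T) (Fin r) ℝ := Qᵀ * F with hG
  have hQQ : Q * Qᵀ = 1 := mul_eq_one_comm.mp hQ1
  have hGG : Gᵀ * G = (T:ℝ) • 1 := by
    rw [hG, Matrix.transpose_mul, Matrix.transpose_transpose,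
      show Fᵀ * Q * (Qᵀ * F) = Fᵀ * (Q * Qᵀ) * F by simp [Matrix.mul_assoc],
      hQQ, Matrix.mul_one, hF]
  set s : Fin T → ℝ := fun t => ∑ k : Fin r, (G t k)^2 with hs
  have htr : trace (Fᵀ * (Q * Matrix.diagonal ν * Qᵀ) * F) = ∑ t : Fin T, ν t * s t := by
    have e1 : Fᵀ * (Q * Matrix.diagonal ν * Qᵀ) * F = Gᵀ * Matrix.diagonal ν * G := by
      rw [hG, Matrix.transpose_mul, Matrix.transpose_transpose]
      simp [Matrix.mul_assoc]
    rw [e1, trace_eig]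
  have hs0 : ∀ t, 0 ≤ s t := fun t => Finset.sum_nonneg fun k _ => sq_nonneg _
  have hsT : ∀ t, s t ≤ (T:ℝ) := by
    intro t
    set P : Matrix (Fin T) (Fin T) ℝ := G * Gᵀ with hP
    have hPsymm : ∀ u v, P u v = P v u := by
      intro u v
      simp [hP, Matrix.mul_apply, mul_comm]
    have hPs : P t t = s t := by
      simp [hP, hs, Matrix.mul_apply, pow_two]
    have hPP : P * P = (T:ℝ) • P := by
      rw [hP, show G * Gᵀ * (G * Gᵀ) = G * (Gᵀ * G) * Gᵀ by simp [Matrix.mul_assoc],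
        hGG, Matrix.mul_smul, Matrix.mul_one, Matrix.smul_mul]
    have hdiag : (T:ℝ) * s t = ∑ u : Fin T, (P t u)^2 := by
      have := congrFun (congrFun hPP t) t
      simp only [Matrix.mul_apply, Matrix.smul_apply, smul_eq_mul] at this
      rw [← hPs, ← this]
      apply Finset.sum_congr rfl; intro u _
      rw [pow_two, hPsymm u t]
    have hle : (s t)^2 ≤ (T:ℝ) * s t := by
      rw [hdiag, ← hPs]
      exact Finset.single_le_sum (f := fun u => (P t u)^2) (fun u _ => sq_nonneg _)
        (Finset.mem_univ t)
    nlinarith [hs0 t, hle]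
  have hsum : ∑ t : Fin T, s t = (r:ℝ) * T := by
    rw [hs]
    rw [Finset.sum_comm]
    have : ∀ k : Fin r, ∑ t : Fin T, (G t k)^2 = (T:ℝ) := by
      intro k
      have := congrFun (congrFun hGG k) k
      simp only [Matrix.mul_apply, Matrix.transpose_apply, Matrix.smul_apply,
        Matrix.one_apply_eq, smul_eq_mul, mul_one] at this
      rw [← this]
      apply Finset.sum_congr rfl; intro t _; ring
    rw [Finset.sum_congr rfl fun k _ => this k]
    simp [mul_comm]
  set c : ℝ := ν ⟨r - 1, lt_of_lt_of_le (Nat.sub_lt hr Nat.one_pos) hrT⟩ with hcdef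
  set w : Fin T → ℝ := fun t => if (t : ℕ) < r then (T:ℝ) else 0 with hw
  have key : ∀ t : Fin T, 0 ≤ (ν t - c) * (w t - s t) := by
    intro t
    rcases lt_or_ge (t : ℕ) r with h | h
    · have h1 : c ≤ ν t := hν (by rw [Fin.le_def]; simpa using by omega)
      have h2 : w t = (T:ℝ) := by rw [hw]; simp [h]
      have := hsT t
      nlinarith
    · have h1 : ν t ≤ c := hν (by rw [Fin.le_def]; simpa using by omega)
      have h2 : w t = 0 := by rw [hw]; simp [Nat.not_lt.mpr h]
      have := hs0 t
      nlinarith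
  have hmap : (Finset.univ.map ⟨Fin.castLE hrT, Fin.castLE_injective hrT⟩ : Finset (Fin T))
      = Finset.univ.filter (fun t : Fin T => (t : ℕ) < r) := by
    ext t
    simp only [Finset.mem_map, Finset.mem_univ, true_and, Finset.mem_filter,
      Function.Embedding.coeFn_mk]
    constructor
    · rintro ⟨k, rfl⟩; exact k.isLt
    · intro h; exact ⟨⟨t, h⟩, rfl⟩
  have hfilt : ∀ f : Fin T → ℝ,
      ∑ t ∈ Finset.univ.filter (fun t : Fin T => (t : ℕ) < r), f t
        = ∑ k : Fin r, f (Fin.castLE hrT k) := by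
    intro f
    rw [← hmap, Finset.sum_map]
    rfl
  have hwsum1 : ∑ t : Fin T, ν t * w t = (T:ℝ) * ∑ k : Fin r, ν (Fin.castLE hrT k) := by
    rw [hw]
    simp only [mul_ite, mul_zero]
    rw [← Finset.sum_filter, hfilt, Finset.mul_sum]
    apply Finset.sum_congr rfl; intro k _; ring
  have hwsum2 : ∑ t : Fin T, w t = (r:ℝ) * T := by
    rw [hw]
    rw [← Finset.sum_filter, hfilt]
    simp [mul_comm]
  have hkey : 0 ≤ ∑ t : Fin T, (ν t - c) * (w t - s t) :=
    Finset.sum_nonneg fun t _ => key t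
  have hexp : ∑ t : Fin T, (ν t - c) * (w t - s t)
      = (∑ t : Fin T, ν t * w t) - (∑ t : Fin T, ν t * s t)
        - c * ((∑ t : Fin T, w t) - (∑ t : Fin T, s t)) := by
    simp only [sub_mul, mul_sub]
    rw [Finset.sum_sub_distrib, Finset.sum_sub_distrib, Finset.sum_sub_distrib,
      Finset.mul_sum, Finset.mul_sum]
    ring
  rw [htr]
  rw [hexp, hwsum1, hwsum2, hsum] at hkey
  linarith

/-- The WPC estimators: if the columns of `F̂` are `√T` times orthonormal eigenvectors of
`Yᵀ W Y` for its `r` largest eigenvalues and `Λ̂ = T⁻¹ Y F̂`, then `(1/T) F̂ᵀ F̂ = I_r`,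
`Λ̂ᵀ W Λ̂` is diagonal, and `(Λ̂, F̂)` minimizes the weighted least squares objective over
all `(Λ, F)` with `(1/T) Fᵀ F = I_r`. -/
theorem stmt11 (N T r : ℕ) (hrT : r ≤ T)
    (W : Matrix (Fin N) (Fin N) ℝ) (hW : W.PosSemidef)
    (Y : Matrix (Fin N) (Fin T) ℝ)
    (ν : Fin T → ℝ) (hν : Antitone ν)
    (hQ : ∃ Q : Matrix (Fin T) (Fin T) ℝ, Qᵀ * Q = 1 ∧
        Yᵀ * W * Y = Q * Matrix.diagonal ν * Qᵀ)
    (Fhat : Matrix (Fin T) (Fin r) ℝ)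
    (hFnorm : (1 / (T : ℝ)) • (Fhatᵀ * Fhat) = 1)
    (hFeig : ∀ k : Fin r, (Yᵀ * W * Y) *ᵥ (fun t => Fhat t k)
        = ν (Fin.castLE hrT k) • fun t => Fhat t k) :
    ((1 / (T : ℝ)) • (Fhatᵀ * Fhat) = 1)
    ∧ (((1 / (T : ℝ)) • (Y * Fhat))ᵀ * W * ((1 / (T : ℝ)) • (Y * Fhat))).IsDiag
    ∧ (∀ (Λ : Matrix (Fin N) (Fin r) ℝ) (F : Matrix (Fin T) (Fin r) ℝ),
        (1 / (T : ℝ)) • (Fᵀ * F) = 1 →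
        trace ((Y - ((1 / (T : ℝ)) • (Y * Fhat)) * Fhatᵀ)ᵀ * W *
            (Y - ((1 / (T : ℝ)) • (Y * Fhat)) * Fhatᵀ))
        ≤ trace ((Y - Λ * Fᵀ)ᵀ * W * (Y - Λ * Fᵀ))) := by
  rcases Nat.eq_zero_or_pos T with hT0 | hTpos
  · subst hT0
    have hr0 : r = 0 := Nat.le_zero.mp hrT
    subst hr0
    refine ⟨hFnorm, ?_, ?_⟩
    · intro i j _
      exact i.elim0
    · intro Λ F _
      simp [Matrix.trace]
  have hT' : (T:ℝ) ≠ 0 := Nat.cast_ne_zero.mpr hTpos.ne'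
  have hWs : Wᵀ = W := by
    ext i j; simpa using congrFun (congrFun hW.1 i) j
  obtain ⟨Q, hQ1, hQ2⟩ := hQ
  have unnorm : ∀ (M : Matrix (Fin r) (Fin r) ℝ),
      (1/(T:ℝ)) • M = 1 → M = (T:ℝ) • (1 : Matrix (Fin r) (Fin r) ℝ) := by
    intro M h
    have h2 : (T:ℝ) • ((1/(T:ℝ)) • M) = (T:ℝ) • (1 : Matrix (Fin r) (Fin r) ℝ) := by rw [h]
    rwa [smul_smul, mul_one_div, div_self hT', one_smul] at h2
  have hFhatN : Fhatᵀ * Fhat = (T:ℝ) • 1 := unnorm _ hFnorm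
  have hAF : ∀ (t : Fin T) (k : Fin r),
      ((Yᵀ * W * Y) * Fhat) t k = ν (Fin.castLE hrT k) * Fhat t k := by
    intro t k
    have := congrFun (hFeig k) t
    simpa [Matrix.mulVec, dotProduct, Matrix.mul_apply] using this
  -- trace of Fhatᵀ A Fhat
  have hFhatTr : trace (Fhatᵀ * (Yᵀ * W * Y) * Fhat)
      = (T:ℝ) * ∑ k : Fin r, ν (Fin.castLE hrT k) := by
    rw [Matrix.mul_assoc, Matrix.trace, Finset.mul_sum]
    apply Finset.sum_congr rfl
    intro k _
    simp only [Matrix.diag_apply]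
    rw [Matrix.mul_apply]
    simp only [Matrix.transpose_apply]
    have e1 : ∑ t : Fin T, Fhat t k * ((Yᵀ * W * Y) * Fhat) t k
        = ν (Fin.castLE hrT k) * ∑ t : Fin T, Fhat t k * Fhat t k := by
      rw [Finset.mul_sum]
      apply Finset.sum_congr rfl
      intro t _
      rw [hAF t k]; ring
    rw [e1]
    have e2 : ∑ t : Fin T, Fhat t k * Fhat t k = (T:ℝ) := by
      have := congrFun (congrFun hFhatN k) k
      simp only [Matrix.mul_apply, Matrix.transpose_apply, Matrix.smul_apply,
        Matrix.one_apply_eq, smul_eq_mul, mul_one] at this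
      rw [← this]
    rw [e2]; ring
  refine ⟨hFnorm, ?_, ?_⟩
  · -- diagonality
    intro j k hjk
    have hM : ((1/(T:ℝ)) • (Y * Fhat))ᵀ * W * ((1/(T:ℝ)) • (Y * Fhat))
        = ((1/(T:ℝ)) * (1/(T:ℝ))) • (Fhatᵀ * ((Yᵀ * W * Y) * Fhat)) := by
      simp only [Matrix.transpose_smul, Matrix.transpose_mul, Matrix.smul_mul,
        Matrix.mul_smul, smul_smul, Matrix.mul_assoc]
    rw [hM, Matrix.smul_apply, Matrix.mul_apply]
    simp only [Matrix.transpose_apply, smul_eq_mul]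
    have e1 : ∑ t : Fin T, Fhat t j * ((Yᵀ * W * Y) * Fhat) t k
        = ν (Fin.castLE hrT k) * ∑ t : Fin T, Fhat t j * Fhat t k := by
      rw [Finset.mul_sum]
      apply Finset.sum_congr rfl
      intro t _
      rw [hAF t k]; ring
    have e2 : ∑ t : Fin T, Fhat t j * Fhat t k = 0 := by
      have := congrFun (congrFun hFhatN j) k
      simp only [Matrix.mul_apply, Matrix.transpose_apply, Matrix.smul_apply,
        Matrix.one_apply_ne hjk, smul_eq_mul, mul_zero] at this
      rw [← this]
    rw [e1, e2]
    ring
  · -- minimization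
    intro Λ F hF
    have hFd : Fᵀ * F = (T:ℝ) • 1 := unnorm _ hF
    rw [expandObj hTpos hWs Y ((1/(T:ℝ)) • (Y * Fhat)) Fhat hFhatN,
      expandObj hTpos hWs Y Λ F hFd]
    have hzero : ((1/(T:ℝ)) • (Y * Fhat) - (1/(T:ℝ)) • (Y * Fhat)) = 0 := sub_self _
    rw [hzero]
    have hz2 : trace ((0 : Matrix (Fin N) (Fin r) ℝ)ᵀ * W * (0 : Matrix (Fin N) (Fin r) ℝ)) = 0 := by simp
    rw [hz2]
    have hmaxF : trace (Fᵀ * (Yᵀ * W * Y) * F)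
        ≤ (T:ℝ) * ∑ k : Fin r, ν (Fin.castLE hrT k) := by
      rw [hQ2]
      exact maxTrace hrT ν hν Q hQ1 F hFd
    have hnn : 0 ≤ trace ((Λ - (1/(T:ℝ)) • (Y * F))ᵀ * W * (Λ - (1/(T:ℝ)) • (Y * F))) :=
      trace_conj_nonneg hW _
    have hcpos : 0 < 1/(T:ℝ) := by positivity
    have hTpos' : (0:ℝ) < T := by exact_mod_cast hTpos
    rw [hFhatTr]
    nlinarith [mul_le_mul_of_nonneg_left hmaxF hcpos.le]
end
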